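/- Let n ≥ 1. For each s ∈ {1,…,n}, let T_s be the unitary on ℂ^{2^n} ⊗ ℂ^{2^n} ⊗ ℂ² acting on computational basis vectors by T_s(|y⟩ ⊗ |z⟩ ⊗ |b⟩) = |y⟩ ⊗ |z⟩ ⊗ |b ⊕ (y_s ∧ z_s)⟩ for y, z ∈ {0,1}^n and b ∈ {0,1}, and define the inner-product clock Hamiltonian H_IP = Σ_{s=1}^{n} √(s(n−s+1)) (E_{s,s-1} ⊗ T_s + E_{s-1,s} ⊗ T_s†) on ℂ^{n+1} ⊗ ℂ^{2^n} ⊗ ℂ^{2^n} ⊗ ℂ². Then for all y, z ∈ {0,1}^n and b ∈ {0,1}, exp(−i(π/2)·H_IP)(e_0 ⊗ |y⟩ ⊗ |z⟩ ⊗ |b⟩) = (−i)^n · e_n ⊗ |y⟩ ⊗ |z⟩ ⊗ |b ⊕ (⊕_{s=1}^{n} (y_s ∧ z_s))⟩, where e_0 and e_n are the first and last standard basis vectors of ℂ^{n+1}. -/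

import Mathlib

open Matrix Kronecker

/-- The Toffoli-type step `T_s` on `ℂ^{2^n} ⊗ ℂ^{2^n} ⊗ ℂ²` (basis indexed by pairs of
bit strings and one bit): `T_s(|y⟩ ⊗ |z⟩ ⊗ |b⟩) = |y⟩ ⊗ |z⟩ ⊗ |b ⊕ (y_s ∧ z_s)⟩`,
with bits in `ZMod 2` (so `⊕` is `+` and `∧` is `*`). -/
def ipStep (n : ℕ) (s : Fin n) :
    Matrix ((Fin n → ZMod 2) × (Fin n → ZMod 2) × ZMod 2)
      ((Fin n → ZMod 2) × (Fin n → ZMod 2) × ZMod 2) ℂ :=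
  Matrix.of fun p q => if p = (q.1, q.2.1, q.2.2 + q.1 s * q.2.1 s) then 1 else 0

/-- The inner-product clock Hamiltonian
`H_IP = Σ_{s=1}^{n} √(s(n−s+1)) (E_{s,s-1} ⊗ T_s + E_{s-1,s} ⊗ T_s†)`
on `ℂ^{n+1} ⊗ ℂ^{2^n} ⊗ ℂ^{2^n} ⊗ ℂ²` (here indexed by `s : Fin n`, representing `s+1`). -/
noncomputable def ipHam (n : ℕ) :
    Matrix ((Fin (n + 1)) × ((Fin n → ZMod 2) × (Fin n → ZMod 2) × ZMod 2))
      ((Fin (n + 1)) × ((Fin n → ZMod 2) × (Fin n → ZMod 2) × ZMod 2)) ℂ :=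
  ∑ s : Fin n, (Real.sqrt ((((s : ℕ) + 1) * (n - (s : ℕ)) : ℕ)) : ℂ) •
    ((Matrix.single s.succ s.castSucc (1 : ℂ)) ⊗ₖ ipStep n s +
      (Matrix.single s.castSucc s.succ (1 : ℂ)) ⊗ₖ (ipStep n s)ᴴ)

open NormedSpace
open Fin.NatCast

namespace IpAux

lemma zm (a c : ZMod 2) : a + c + c = a := by revert a c; decide
lemma zm_ne_one (a : ZMod 2) : ¬ a = 1 ↔ a = 0 := by revert a; decide

variable {n : ℕ}

def bitv (n : ℕ) (s : Fin n) : Fin n → ZMod 2 := fun t => if t = s then 1 else 0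

lemma add_bitv_add_bitv (x : Fin n → ZMod 2) (s : Fin n) : x + bitv n s + bitv n s = x :=
  funext fun t => zm _ _

def shiftM (n : ℕ) (v : Fin n → ZMod 2) :
    Matrix (Fin n → ZMod 2) (Fin n → ZMod 2) ℂ :=
  Matrix.of fun p q => if p = q + v then 1 else 0

lemma shiftM_mul (v w : Fin n → ZMod 2) : shiftM n v * shiftM n w = shiftM n (v + w) := by
  ext p q
  rw [Matrix.mul_apply]
  simp only [shiftM, Matrix.of_apply]
  rw [Finset.sum_eq_single (q + w)]
  · simp [add_assoc, add_comm w v]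
  · intro r _ hr
    rw [if_neg hr, mul_zero]
  · simp

lemma shiftM_zero : shiftM n 0 = 1 := by
  ext p q
  simp [shiftM, Matrix.one_apply]

lemma shiftM_invol (v : Fin n → ZMod 2) : shiftM n v * shiftM n v = 1 := by
  rw [shiftM_mul, show v + v = 0 from funext fun t => by simpa using zm 0 (v t), shiftM_zero]

def wtf (x : Fin n → ZMod 2) : ℕ := (Finset.univ.filter fun s => x s = 1).card

lemma wtf_le (x : Fin n → ZMod 2) : wtf x ≤ n :=
  le_trans (Finset.card_filter_le _ _) (by simp)

lemma filter_zero_card (x : Fin n → ZMod 2) :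
    (Finset.univ.filter fun s => x s = 0).card = n - wtf x := by
  have h := Finset.card_filter_add_card_filter_not (s := Finset.univ)
    (p := fun s : Fin n => x s = 1)
  have h2 : (Finset.univ.filter fun s : Fin n => ¬ x s = 1)
      = (Finset.univ.filter fun s => x s = 0) := by
    apply Finset.filter_congr
    intro s _
    simp [zm_ne_one]
  rw [h2] at h
  simp only [Finset.card_univ, Fintype.card_fin] at h
  simp only [wtf]
  omega

lemma wtf_add_bitv (x : Fin n → ZMod 2) (s : Fin n) (hs : x s = 0) :
    wtf (x + bitv n s) = wtf x + 1 := by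
  have hfilter : (Finset.univ.filter fun t => (x + bitv n s) t = 1)
      = insert s (Finset.univ.filter fun t => x t = 1) := by
    ext t
    by_cases ht : t = s
    · subst ht
      simp only [Finset.mem_filter, Finset.mem_insert, Finset.mem_univ, true_and]; simp [Pi.add_apply, bitv, hs]
    · simp only [Finset.mem_filter, Finset.mem_insert, Finset.mem_univ, true_and]; simp [Pi.add_apply, bitv, ht]
  rw [wtf, hfilter, Finset.card_insert_of_notMem (by simp [hs])]
  rfl

lemma wtf_lt_of_zero (x : Fin n → ZMod 2) (s : Fin n) (hs : x s = 0) : wtf x < n := by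
  have : s ∉ (Finset.univ.filter fun t => x t = 1) := by simp [hs]
  have hss : (Finset.univ.filter fun t => x t = 1) ⊂ Finset.univ :=
    (Finset.ssubset_iff_of_subset (Finset.subset_univ _)).mpr ⟨s, Finset.mem_univ s, this⟩
  simpa [wtf, Finset.card_univ] using Finset.card_lt_card hss

lemma wtf_add_bitv' (x : Fin n → ZMod 2) (s : Fin n) (hs : x s = 1) :
    wtf (x + bitv n s) + 1 = wtf x := by
  have h0 : (x + bitv n s) s = 0 := by simp [Pi.add_apply, bitv, hs]; decide
  have := wtf_add_bitv (x + bitv n s) s h0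
  rw [add_bitv_add_bitv] at this
  omega

lemma wtf_eq_n (x : Fin n → ZMod 2) (h : wtf x = n) (s : Fin n) : x s = 1 := by
  have : (Finset.univ.filter fun t => x t = 1) = Finset.univ := by
    apply Finset.eq_univ_of_card
    simpa [wtf, Fintype.card_fin] using h
  have hs := Finset.mem_univ s
  rw [← this, Finset.mem_filter] at hs
  exact hs.2

lemma wtf_eq_zero (x : Fin n → ZMod 2) (h : wtf x = 0) (s : Fin n) : x s = 0 := by
  rw [wtf, Finset.card_eq_zero] at h
  by_contra hs
  rw [← zm_ne_one, not_not] at hs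
  have : s ∈ (Finset.univ.filter fun t => x t = 1) := by simp [hs]
  simp [h] at this


def ccf (y z : Fin n → ZMod 2) (k : ℕ) : ZMod 2 :=
  ∑ s ∈ Finset.univ.filter (fun s : Fin n => (s : ℕ) < k), y s * z s

lemma ccf_zero (y z : Fin n → ZMod 2) : ccf y z 0 = 0 := by
  simp [ccf]

lemma ccf_top (y z : Fin n → ZMod 2) : ccf y z n = ∑ s : Fin n, y s * z s := by
  rw [ccf, Finset.filter_true_of_mem (fun s _ => s.isLt)]

lemma ccf_succ (y z : Fin n → ZMod 2) (k : ℕ) (hk : k < n) :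
    ccf y z (k + 1) = ccf y z k + y ⟨k, hk⟩ * z ⟨k, hk⟩ := by
  have hfilter : (Finset.univ.filter fun s : Fin n => (s : ℕ) < k + 1)
      = insert ⟨k, hk⟩ (Finset.univ.filter fun s : Fin n => (s : ℕ) < k) := by
    ext s
    simp only [Finset.mem_filter, Finset.mem_univ, true_and, Finset.mem_insert,
      Nat.lt_succ_iff_lt_or_eq, Fin.ext_iff]
    tauto
  rw [ccf, hfilter, Finset.sum_insert (by simp), ccf, add_comm]

lemma sqrt_choose_pos {k : ℕ} (h : k ≤ n) : 0 < Real.sqrt (n.choose k) :=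
  Real.sqrt_pos.mpr (by exact_mod_cast Nat.choose_pos h)

lemma w_up {k : ℕ} (h : k < n) :
    Real.sqrt (((k + 1) * (n - k) : ℕ)) * (Real.sqrt (n.choose k))⁻¹
      = ((n - k : ℕ) : ℝ) * (Real.sqrt (n.choose (k + 1)))⁻¹ := by
  have hB := sqrt_choose_pos (n := n) (le_of_lt h)
  have hB' := sqrt_choose_pos (n := n) (Nat.succ_le_of_lt h)
  have key : ((k + 1) * (n - k) : ℕ) * (n.choose (k + 1)) = ((n - k) * (n - k)) * n.choose k := by
    have h1 := Nat.choose_succ_right_eq n k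
    calc ((k + 1) * (n - k) : ℕ) * (n.choose (k + 1))
        = (n - k) * (n.choose (k + 1) * (k + 1)) := by ring
      _ = (n - k) * (n.choose k * (n - k)) := by rw [h1]
      _ = ((n - k) * (n - k)) * n.choose k := by ring
  rw [← div_eq_mul_inv, ← div_eq_mul_inv, div_eq_div_iff hB.ne' hB'.ne']
  have h2 : ((n - k : ℕ) : ℝ) = Real.sqrt (((n - k) * (n - k) : ℕ)) := by
    push_cast
    rw [Real.sqrt_mul_self (by positivity)]
  rw [h2, ← Real.sqrt_mul (by positivity), ← Real.sqrt_mul (by positivity)]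
  congr 1
  exact_mod_cast key

lemma w_down {k : ℕ} (h0 : 0 < k) (h : k ≤ n) :
    Real.sqrt ((((k - 1) + 1) * (n - (k - 1)) : ℕ)) * (Real.sqrt (n.choose k))⁻¹
      = (k : ℝ) * (Real.sqrt (n.choose (k - 1)))⁻¹ := by
  obtain ⟨j, rfl⟩ : ∃ j, k = j + 1 := ⟨k - 1, by omega⟩
  simp only [Nat.add_sub_cancel]
  have hB := sqrt_choose_pos (n := n) h
  have hB' := sqrt_choose_pos (n := n) (le_trans (Nat.le_succ j) h)
  have key : ((j + 1) * (n - j) : ℕ) * (n.choose j) = ((j + 1) * (j + 1)) * n.choose (j + 1) := by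
    have h1 := Nat.choose_succ_right_eq n j
    calc ((j + 1) * (n - j) : ℕ) * (n.choose j)
        = (j + 1) * (n.choose j * (n - j)) := by ring
      _ = (j + 1) * (n.choose (j + 1) * (j + 1)) := by rw [h1]
      _ = ((j + 1) * (j + 1)) * n.choose (j + 1) := by ring
  rw [← div_eq_mul_inv, ← div_eq_mul_inv, div_eq_div_iff hB.ne' hB'.ne']
  have h2 : ((j + 1 : ℕ) : ℝ) = Real.sqrt (((j + 1) * (j + 1) : ℕ)) := by
    push_cast
    rw [Real.sqrt_mul_self (by positivity)]
  rw [h2, ← Real.sqrt_mul (by positivity), ← Real.sqrt_mul (by positivity)]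
  congr 1
  exact_mod_cast key


theorem exp_smul_of_involutive {m : Type*} [Fintype m] [DecidableEq m]
    (c : ℂ) (M : Matrix m m ℂ) (hM : M * M = 1) :
    exp (c • M) = Complex.cosh c • (1 : Matrix m m ℂ) + Complex.sinh c • M := by
  letI : SeminormedRing (Matrix m m ℂ) := Matrix.linftyOpSemiNormedRing
  letI : NormedRing (Matrix m m ℂ) := Matrix.linftyOpNormedRing
  letI : NormedAlgebra ℂ (Matrix m m ℂ) := Matrix.linftyOpNormedAlgebra
  rw [exp_eq_tsum ℂ]
  have h2 : M ^ 2 = 1 := by rw [pow_two, hM]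
  have hpow : ∀ k : ℕ, M ^ k = if Even k then 1 else M := by
    intro k
    rcases Nat.even_or_odd k with ⟨j, rfl⟩ | ⟨j, rfl⟩
    · rw [if_pos ⟨j, rfl⟩, ← two_mul, pow_mul, h2, one_pow]
    · rw [if_neg (by simp [Nat.even_add_one, parity_simps]), pow_succ, pow_mul, h2, one_pow,
        one_mul]
  have h : HasSum (fun k : ℕ => ((Nat.factorial k : ℂ))⁻¹ • (c • M) ^ k)
      (Complex.cosh c • (1 : Matrix m m ℂ) + Complex.sinh c • M) := by
    refine HasSum.even_add_odd ?_ ?_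
    · have := (Complex.hasSum_cosh c).smul_const (1 : Matrix m m ℂ)
      convert this using 2 with k
      rw [smul_pow, hpow, if_pos ⟨k, (two_mul k)⟩, smul_smul, div_eq_inv_mul]
    · have := (Complex.hasSum_sinh c).smul_const M
      convert this using 2 with k
      rw [smul_pow, hpow, if_neg (by simp [Nat.even_add_one, parity_simps]), smul_smul,
        div_eq_inv_mul]
  exact h.tsum_eq

theorem exp_mul_intertwine {m m' : Type*} [Fintype m] [DecidableEq m] [Fintype m']
    [DecidableEq m'] (H : Matrix m m ℂ) (G : Matrix m' m' ℂ) (P : Matrix m m' ℂ)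
    (h : H * P = P * G) : exp H * P = P * exp G := by
  letI : SeminormedRing (Matrix m m ℂ) := Matrix.linftyOpSemiNormedRing
  letI : NormedRing (Matrix m m ℂ) := Matrix.linftyOpNormedRing
  letI : NormedAlgebra ℂ (Matrix m m ℂ) := Matrix.linftyOpNormedAlgebra
  letI : SeminormedRing (Matrix m' m' ℂ) := Matrix.linftyOpSemiNormedRing
  letI : NormedRing (Matrix m' m' ℂ) := Matrix.linftyOpNormedRing
  letI : NormedAlgebra ℂ (Matrix m' m' ℂ) := Matrix.linftyOpNormedAlgebra
  have hk : ∀ k : ℕ, H ^ k * P = P * G ^ k := by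
    intro k
    induction k with
    | zero => simp
    | succ k ih =>
        rw [pow_succ, pow_succ, Matrix.mul_assoc, h, ← Matrix.mul_assoc, ih, Matrix.mul_assoc]
  let L : Matrix m m ℂ →ₗ[ℂ] Matrix m m' ℂ :=
    { toFun := fun A => A * P
      map_add' := fun A B => Matrix.add_mul A B P
      map_smul' := fun r A => Matrix.smul_mul r A P }
  let R : Matrix m' m' ℂ →ₗ[ℂ] Matrix m m' ℂ :=
    { toFun := fun A => P * A
      map_add' := fun A B => Matrix.mul_add P A B
      map_smul' := fun r A => (Matrix.mul_smul P r A) }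
  have hL : Continuous L := L.continuous_of_finiteDimensional
  have hR : Continuous R := R.continuous_of_finiteDimensional
  calc exp H * P = L (∑' k : ℕ, ((Nat.factorial k : ℂ))⁻¹ • H ^ k) := by rw [exp_eq_tsum ℂ]; rfl
    _ = ∑' k : ℕ, L (((Nat.factorial k : ℂ))⁻¹ • H ^ k) :=
        ((expSeries_summable' (𝕂 := ℂ) H).hasSum.mapL ⟨L, hL⟩).tsum_eq.symm
    _ = ∑' k : ℕ, R (((Nat.factorial k : ℂ))⁻¹ • G ^ k) := by
        refine tsum_congr fun k => ?_
        show ((Nat.factorial k : ℂ))⁻¹ • H ^ k * P = P * (((Nat.factorial k : ℂ))⁻¹ • G ^ k)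
        rw [Matrix.smul_mul, hk, Matrix.mul_smul]
    _ = R (∑' k : ℕ, ((Nat.factorial k : ℂ))⁻¹ • G ^ k) :=
        ((expSeries_summable' (𝕂 := ℂ) G).hasSum.mapL ⟨R, hR⟩).tsum_eq
    _ = P * exp G := by rw [exp_eq_tsum ℂ]; rfl

lemma exp_smul_shift (c : ℂ) (hch : Complex.cosh c = 0) (hsh : Complex.sinh c = -Complex.I)
    (v : Fin n → ZMod 2) :
    exp (c • shiftM n v) = (-Complex.I) • shiftM n v := by
  rw [exp_smul_of_involutive c _ (shiftM_invol v), hch, hsh]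
  simp

lemma exp_finset (c : ℂ) (hch : Complex.cosh c = 0) (hsh : Complex.sinh c = -Complex.I)
    (t : Finset (Fin n)) :
    exp (∑ s ∈ t, c • shiftM n (bitv n s))
      = (-Complex.I) ^ t.card • shiftM n (∑ s ∈ t, bitv n s) := by
  classical
  induction t using Finset.induction_on with
  | empty => simp [shiftM_zero, exp_zero]
  | insert a t ha ih =>
      have hcomm : Commute (c • shiftM n (bitv n a)) (∑ s ∈ t, c • shiftM n (bitv n s)) := by
        apply Commute.sum_right
        intro s _
        apply Commute.smul_left
        apply Commute.smul_right
        show _ = _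
        rw [shiftM_mul, shiftM_mul, add_comm]
      rw [Finset.sum_insert ha, Matrix.exp_add_of_commute _ _ hcomm, ih, exp_smul_shift c hch hsh,
        Finset.card_insert_of_notMem ha, Finset.sum_insert ha, Matrix.smul_mul,
        Matrix.mul_smul, smul_smul, shiftM_mul, pow_succ']

noncomputable def clockG (n : ℕ) : Matrix (Fin n → ZMod 2) (Fin n → ZMod 2) ℂ :=
  ∑ s : Fin n, shiftM n (bitv n s)

lemma sum_bitv : ∑ s : Fin n, bitv n s = 1 := by
  funext t
  rw [Finset.sum_apply]
  simp [bitv, Pi.one_apply, Finset.sum_ite_eq]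


lemma cosh_c : Complex.cosh (-Complex.I * ((Real.pi / 2 : ℝ) : ℂ)) = 0 := by
  rw [show -Complex.I * ((Real.pi / 2 : ℝ) : ℂ) = -(((Real.pi / 2 : ℝ) : ℂ) * Complex.I) by ring,
    Complex.cosh_neg, Complex.cosh_mul_I, ← Complex.ofReal_cos, Real.cos_pi_div_two,
    Complex.ofReal_zero]

lemma sinh_c : Complex.sinh (-Complex.I * ((Real.pi / 2 : ℝ) : ℂ)) = -Complex.I := by
  rw [show -Complex.I * ((Real.pi / 2 : ℝ) : ℂ) = -(((Real.pi / 2 : ℝ) : ℂ) * Complex.I) by ring,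
    Complex.sinh_neg, Complex.sinh_mul_I, ← Complex.ofReal_sin, Real.sin_pi_div_two,
    Complex.ofReal_one, one_mul]

lemma exp_clockG :
    exp ((-Complex.I * ((Real.pi / 2 : ℝ) : ℂ)) • clockG n)
      = (-Complex.I) ^ n • shiftM n 1 := by
  rw [clockG, Finset.smul_sum, exp_finset _ cosh_c sinh_c, sum_bitv, Finset.card_univ,
    Fintype.card_fin]

lemma ipStep_conjT (s : Fin n) : (ipStep n s)ᴴ = ipStep n s := by
  have dir : ∀ a b : (Fin n → ZMod 2) × (Fin n → ZMod 2) × ZMod 2,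
      a = (b.1, b.2.1, b.2.2 + b.1 s * b.2.1 s) → b = (a.1, a.2.1, a.2.2 + a.1 s * a.2.1 s) := by
    rintro ⟨a1, a2, a3⟩ ⟨b1, b2, b3⟩ h
    simp only [Prod.mk.injEq] at h
    obtain ⟨rfl, rfl, rfl⟩ := h
    simp [zm]
  ext a b
  simp only [Matrix.conjTranspose_apply, ipStep, Matrix.of_apply]
  have : (b = (a.1, a.2.1, a.2.2 + a.1 s * a.2.1 s)) ↔
      (a = (b.1, b.2.1, b.2.2 + b.1 s * b.2.1 s)) := ⟨dir b a, dir a b⟩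
  simp only [this]
  split_ifs <;> simp

noncomputable def Pmat (n : ℕ) (y z : Fin n → ZMod 2) (b : ZMod 2) :
    Matrix ((Fin (n + 1)) × ((Fin n → ZMod 2) × (Fin n → ZMod 2) × ZMod 2))
      (Fin n → ZMod 2) ℂ :=
  Matrix.of fun p x =>
    if p = (((wtf x : ℕ) : Fin (n + 1)), (y, z, b + ccf y z (wtf x)))
    then (((Real.sqrt (n.choose (wtf x)))⁻¹ : ℝ) : ℂ) else 0

lemma fin_val {k : ℕ} (h : k ≤ n) : (((k : ℕ) : Fin (n + 1)) : ℕ) = k :=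
  Fin.val_cast_of_lt (Nat.lt_succ_of_le h)


lemma zm_ne_zero (a : ZMod 2) : ¬ a = 0 ↔ a = 1 := by revert a; decide

lemma lhs_up (y z : Fin n → ZMod 2) (b : ZMod 2) (p1 : Fin (n + 1))
    (p2 : (Fin n → ZMod 2) × (Fin n → ZMod 2) × ZMod 2) (k : ℕ) (hkn : k ≤ n) :
    (∑ s : Fin n, (Real.sqrt ((((s : ℕ) + 1) * (n - (s : ℕ)) : ℕ)) : ℂ) *
        ((Matrix.single s.succ s.castSucc (1 : ℂ)) p1 ((k : ℕ) : Fin (n + 1)) *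
          ipStep n s p2 (y, z, b + ccf y z k))) * (((Real.sqrt (n.choose k))⁻¹ : ℝ) : ℂ)
      = ((((n - k : ℕ) : ℝ) * (Real.sqrt (n.choose (k + 1)))⁻¹ : ℝ) : ℂ) *
        (if (p1, p2) = (((k + 1 : ℕ) : Fin (n + 1)), (y, z, b + ccf y z (k + 1))) then 1 else 0) := by
  rcases Nat.lt_or_ge k n with h | h
  · rw [Finset.sum_eq_single (⟨k, h⟩ : Fin n)]
    · have hsucc : (⟨k, h⟩ : Fin n).succ = ((k + 1 : ℕ) : Fin (n + 1)) := by
        apply Fin.ext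
        rw [fin_val (Nat.succ_le_of_lt h)]
        rfl
      have hcast : (⟨k, h⟩ : Fin n).castSucc = ((k : ℕ) : Fin (n + 1)) := by
        apply Fin.ext
        rw [fin_val hkn]
        rfl
      have hoff : (b + ccf y z k) + y ⟨k, h⟩ * z ⟨k, h⟩ = b + ccf y z (k + 1) := by
        rw [ccf_succ y z k h, add_assoc]
      have hstep : ipStep n (⟨k, h⟩ : Fin n) p2 (y, z, b + ccf y z k)
          = if p2 = (y, z, b + ccf y z (k + 1)) then 1 else 0 := by
        simp only [ipStep, Matrix.of_apply, hoff]
      rw [hstep]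
      by_cases h1 : p1 = ((k + 1 : ℕ) : Fin (n + 1)) <;>
        by_cases h2 : p2 = (y, z, b + ccf y z (k + 1))
      · simp only [Matrix.single, Matrix.of_apply, hsucc, hcast, h1, h2, and_self,
          if_true, Prod.mk.injEq, mul_one, one_mul, if_pos rfl]
        exact_mod_cast w_up h
      · simp [Prod.mk.injEq, h2]
      · have hstdB : Matrix.single (⟨k, h⟩ : Fin n).succ (⟨k, h⟩ : Fin n).castSucc (1 : ℂ)
            p1 ((k : ℕ) : Fin (n + 1)) = 0 := by
          rw [hsucc, hcast]
          exact Matrix.single_apply_of_ne _ _ _ _ _ (fun hc => h1 hc.1.symm)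
        rw [hstdB, zero_mul, mul_zero, zero_mul,
          if_neg (fun hc => h1 (congrArg Prod.fst hc)), mul_zero]
      · simp [Prod.mk.injEq, h2]
    · intro s _ hs
      have hne : ¬ s.castSucc = ((k : ℕ) : Fin (n + 1)) := by
        intro hc
        apply hs
        apply Fin.ext
        have := congrArg Fin.val hc
        rw [fin_val hkn] at this
        simpa using this
      simp [Matrix.single, hne]
    · simp
  · have hk : k = n := le_antisymm hkn h
    rw [hk, Finset.sum_eq_zero]
    · simp [Nat.sub_self]
    · intro s _
      have hne : ¬ s.castSucc = ((n : ℕ) : Fin (n + 1)) := by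
        rw [Fin.natCast_eq_last]
        exact Fin.ne_of_lt (Fin.castSucc_lt_last s)
      have hstdB : Matrix.single s.succ s.castSucc (1 : ℂ)
          p1 ((n : ℕ) : Fin (n + 1)) = 0 :=
        Matrix.single_apply_of_ne _ _ _ _ _ (fun hc => hne (hc.2))
      rw [hstdB]
      simp


lemma lhs_down (y z : Fin n → ZMod 2) (b : ZMod 2) (p1 : Fin (n + 1))
    (p2 : (Fin n → ZMod 2) × (Fin n → ZMod 2) × ZMod 2) (k : ℕ) (hkn : k ≤ n) :
    (∑ s : Fin n, (Real.sqrt ((((s : ℕ) + 1) * (n - (s : ℕ)) : ℕ)) : ℂ) *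
        ((Matrix.single s.castSucc s.succ (1 : ℂ)) p1 ((k : ℕ) : Fin (n + 1)) *
          (ipStep n s)ᴴ p2 (y, z, b + ccf y z k))) * (((Real.sqrt (n.choose k))⁻¹ : ℝ) : ℂ)
      = ((((k : ℕ) : ℝ) * (Real.sqrt (n.choose (k - 1)))⁻¹ : ℝ) : ℂ) *
        (if (p1, p2) = (((k - 1 : ℕ) : Fin (n + 1)), (y, z, b + ccf y z (k - 1))) then 1 else 0) := by
  rcases Nat.eq_zero_or_pos k with rfl | hpos
  · rw [Finset.sum_eq_zero]
    · simp
    · intro s _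
      have hne : ¬ s.succ = ((0 : ℕ) : Fin (n + 1)) := by
        intro hc
        have := congrArg Fin.val hc
        rw [fin_val (Nat.zero_le n)] at this
        simp [Fin.val_succ] at this
      have hstdB : Matrix.single s.castSucc s.succ (1 : ℂ)
          p1 ((0 : ℕ) : Fin (n + 1)) = 0 :=
        Matrix.single_apply_of_ne _ _ _ _ _ (fun hc => hne (hc.2))
      rw [hstdB]
      simp
  · obtain ⟨j, rfl⟩ : ∃ j, k = j + 1 := ⟨k - 1, by omega⟩
    simp only [Nat.add_sub_cancel]
    have hj : j < n := by omega
    have hw := w_down (n := n) (k := j + 1) (by omega) hkn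
    simp only [Nat.add_sub_cancel] at hw
    rw [Finset.sum_eq_single (⟨j, hj⟩ : Fin n)]
    · have hsucc : (⟨j, hj⟩ : Fin n).succ = ((j + 1 : ℕ) : Fin (n + 1)) := by
        apply Fin.ext
        rw [fin_val hkn]
        rfl
      have hcast : (⟨j, hj⟩ : Fin n).castSucc = ((j : ℕ) : Fin (n + 1)) := by
        apply Fin.ext
        rw [fin_val (by omega)]
        rfl
      have hoff : (b + ccf y z (j + 1)) + y ⟨j, hj⟩ * z ⟨j, hj⟩ = b + ccf y z j := by
        rw [ccf_succ y z j hj, ← add_assoc]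
        exact zm _ _
      have hstep : (ipStep n (⟨j, hj⟩ : Fin n))ᴴ p2 (y, z, b + ccf y z (j + 1))
          = if p2 = (y, z, b + ccf y z j) then 1 else 0 := by
        rw [ipStep_conjT]
        simp only [ipStep, Matrix.of_apply, hoff]
      rw [hstep]
      by_cases h1 : p1 = ((j : ℕ) : Fin (n + 1))
      · by_cases h2 : p2 = (y, z, b + ccf y z j)
        · simp only [Matrix.single, Matrix.of_apply, hsucc, hcast, h1, h2, and_self,
            if_true, Prod.mk.injEq, mul_one, one_mul, if_pos rfl]
          exact_mod_cast hw
        · simp [Prod.mk.injEq, h2]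
      · have hstdB : Matrix.single (⟨j, hj⟩ : Fin n).castSucc (⟨j, hj⟩ : Fin n).succ
            (1 : ℂ) p1 (((j + 1 : ℕ)) : Fin (n + 1)) = 0 := by
          rw [hsucc, hcast]
          exact Matrix.single_apply_of_ne _ _ _ _ _ (fun hc => h1 hc.1.symm)
        rw [hstdB, zero_mul, mul_zero, zero_mul,
          if_neg (fun hc => h1 (congrArg Prod.fst hc)), mul_zero]
    · intro s _ hs
      have hne : ¬ s.succ = ((j + 1 : ℕ) : Fin (n + 1)) := by
        intro hc
        apply hs
        apply Fin.ext
        have := congrArg Fin.val hc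
        rw [fin_val hkn] at this
        simpa [Fin.val_succ] using this
      have hstdB : Matrix.single s.castSucc s.succ (1 : ℂ)
          p1 ((j + 1 : ℕ) : Fin (n + 1)) = 0 :=
        Matrix.single_apply_of_ne _ _ _ _ _ (fun hc => hne (hc.2))
      rw [hstdB]
      simp
    · simp


lemma rhs_up (y z : Fin n → ZMod 2) (b : ZMod 2) (p1 : Fin (n + 1))
    (p2 : (Fin n → ZMod 2) × (Fin n → ZMod 2) × ZMod 2) (x : Fin n → ZMod 2) :
    (∑ s ∈ Finset.univ.filter (fun s => x s = 0), Pmat n y z b (p1, p2) (x + bitv n s))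
      = ((((n - wtf x : ℕ) : ℝ) * (Real.sqrt (n.choose (wtf x + 1)))⁻¹ : ℝ) : ℂ) *
        (if (p1, p2) = (((wtf x + 1 : ℕ) : Fin (n + 1)), (y, z, b + ccf y z (wtf x + 1)))
          then 1 else 0) := by
  have hterm : ∀ s ∈ Finset.univ.filter (fun s => x s = 0),
      Pmat n y z b (p1, p2) (x + bitv n s)
        = if (p1, p2) = (((wtf x + 1 : ℕ) : Fin (n + 1)), (y, z, b + ccf y z (wtf x + 1)))
            then (((Real.sqrt (n.choose (wtf x + 1)))⁻¹ : ℝ) : ℂ) else 0 := by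
    intro s hs
    have hs0 : x s = 0 := (Finset.mem_filter.1 hs).2
    simp only [Pmat, Matrix.of_apply, wtf_add_bitv x s hs0]
  rw [Finset.sum_congr rfl hterm, Finset.sum_const, filter_zero_card, nsmul_eq_mul]
  split_ifs
  · push_cast
    ring
  · simp

lemma rhs_down (y z : Fin n → ZMod 2) (b : ZMod 2) (p1 : Fin (n + 1))
    (p2 : (Fin n → ZMod 2) × (Fin n → ZMod 2) × ZMod 2) (x : Fin n → ZMod 2) :
    (∑ s ∈ Finset.univ.filter (fun s => x s = 1), Pmat n y z b (p1, p2) (x + bitv n s))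
      = ((((wtf x : ℕ) : ℝ) * (Real.sqrt (n.choose (wtf x - 1)))⁻¹ : ℝ) : ℂ) *
        (if (p1, p2) = (((wtf x - 1 : ℕ) : Fin (n + 1)), (y, z, b + ccf y z (wtf x - 1)))
          then 1 else 0) := by
  have hterm : ∀ s ∈ Finset.univ.filter (fun s => x s = 1),
      Pmat n y z b (p1, p2) (x + bitv n s)
        = if (p1, p2) = (((wtf x - 1 : ℕ) : Fin (n + 1)), (y, z, b + ccf y z (wtf x - 1)))
            then (((Real.sqrt (n.choose (wtf x - 1)))⁻¹ : ℝ) : ℂ) else 0 := by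
    intro s hs
    have hs1 : x s = 1 := (Finset.mem_filter.1 hs).2
    have hwt : wtf (x + bitv n s) = wtf x - 1 := by
      have := wtf_add_bitv' x s hs1
      omega
    simp only [Pmat, Matrix.of_apply, hwt]
  have hcard : (Finset.univ.filter (fun s => x s = 1)).card = wtf x := rfl
  rw [Finset.sum_congr rfl hterm, Finset.sum_const, hcard, nsmul_eq_mul]
  split_ifs
  · push_cast
    ring
  · simp

theorem keyEq (n : ℕ) (y z : Fin n → ZMod 2) (b : ZMod 2) :
    ipHam n * Pmat n y z b = Pmat n y z b * clockG n := by
  ext p x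
  obtain ⟨p1, p2⟩ := p
  have hkn : wtf x ≤ n := wtf_le x
  have hL : (ipHam n * Pmat n y z b) (p1, p2) x
      = ipHam n (p1, p2) (((wtf x : ℕ) : Fin (n + 1)), (y, z, b + ccf y z (wtf x))) *
          (((Real.sqrt (n.choose (wtf x)))⁻¹ : ℝ) : ℂ) := by
    rw [Matrix.mul_apply]
    simp only [Pmat, Matrix.of_apply, mul_ite, mul_zero]
    rw [Finset.sum_ite_eq' Finset.univ
      ((((wtf x : ℕ) : Fin (n + 1)), (y, z, b + ccf y z (wtf x))))
      (fun q => ipHam n (p1, p2) q * (((Real.sqrt (n.choose (wtf x)))⁻¹ : ℝ) : ℂ))]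
    simp
  have hR : (Pmat n y z b * clockG n) (p1, p2) x
      = ∑ s : Fin n, Pmat n y z b (p1, p2) (x + bitv n s) := by
    rw [Matrix.mul_apply]
    simp only [clockG, Matrix.sum_apply, shiftM, Matrix.of_apply, Finset.mul_sum]
    rw [Finset.sum_comm]
    refine Finset.sum_congr rfl fun s _ => ?_
    simp [mul_ite, Finset.sum_ite_eq']
  rw [hL, hR]
  have hHam : ipHam n (p1, p2) (((wtf x : ℕ) : Fin (n + 1)), (y, z, b + ccf y z (wtf x)))
      = (∑ s : Fin n, (Real.sqrt ((((s : ℕ) + 1) * (n - (s : ℕ)) : ℕ)) : ℂ) *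
          ((Matrix.single s.succ s.castSucc (1 : ℂ)) p1 ((wtf x : ℕ) : Fin (n + 1)) *
            ipStep n s p2 (y, z, b + ccf y z (wtf x))))
        + (∑ s : Fin n, (Real.sqrt ((((s : ℕ) + 1) * (n - (s : ℕ)) : ℕ)) : ℂ) *
          ((Matrix.single s.castSucc s.succ (1 : ℂ)) p1 ((wtf x : ℕ) : Fin (n + 1)) *
            (ipStep n s)ᴴ p2 (y, z, b + ccf y z (wtf x)))) := by
    rw [ipHam, ← Finset.sum_add_distrib]
    rw [Matrix.sum_apply]
    refine Finset.sum_congr rfl fun s _ => ?_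
    simp only [Matrix.smul_apply, Matrix.add_apply, Matrix.kroneckerMap_apply, smul_eq_mul]
    ring
  rw [hHam, add_mul, lhs_up y z b p1 p2 (wtf x) hkn, lhs_down y z b p1 p2 (wtf x) hkn,
    ← Finset.sum_filter_add_sum_filter_not Finset.univ (fun s => x s = 0)
      (fun s => Pmat n y z b (p1, p2) (x + bitv n s))]
  have hfilter : Finset.univ.filter (fun s => ¬ x s = 0)
      = Finset.univ.filter (fun s => x s = 1) := by
    apply Finset.filter_congr
    intro s _
    simp [zm_ne_zero]
  rw [hfilter, rhs_up y z b p1 p2 x, rhs_down y z b p1 p2 x]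


lemma mulVec_single_col {a b : Type*} [Fintype b] [DecidableEq b] (M : Matrix a b ℂ) (j : b) :
    M *ᵥ Pi.single j 1 = fun i => M i j := by
  ext i
  simp [Matrix.mulVec, dotProduct, Pi.single_apply, mul_ite]

lemma wtf_zero : wtf (0 : Fin n → ZMod 2) = 0 := by
  rw [wtf, Finset.card_eq_zero, Finset.filter_eq_empty_iff]
  intro s _
  simp

lemma wtf_one : wtf (1 : Fin n → ZMod 2) = n := by
  have h : (Finset.univ.filter fun s : Fin n => (1 : Fin n → ZMod 2) s = 1) = Finset.univ :=
    Finset.filter_true_of_mem (fun s _ => rfl)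
  rw [wtf, h, Finset.card_univ, Fintype.card_fin]

lemma Pcol0 (y z : Fin n → ZMod 2) (b : ZMod 2) :
    (fun p => Pmat n y z b p 0)
      = Pi.single ((0 : Fin (n + 1)), (y, z, b)) (1 : ℂ) := by
  funext p
  rw [Pi.single_apply]
  simp only [Pmat, Matrix.of_apply, wtf_zero, ccf_zero, add_zero, Nat.cast_zero,
    Nat.choose_zero_right, Nat.cast_one, Real.sqrt_one, inv_one, Complex.ofReal_one]

lemma Pcol1 (y z : Fin n → ZMod 2) (b : ZMod 2) :
    (fun p => Pmat n y z b p 1)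
      = Pi.single ((Fin.last n), (y, z, b + ∑ s : Fin n, y s * z s)) (1 : ℂ) := by
  funext p
  rw [Pi.single_apply]
  simp only [Pmat, Matrix.of_apply, wtf_one, ccf_top, Fin.natCast_eq_last,
    Nat.choose_self, Nat.cast_one, Real.sqrt_one, inv_one, Complex.ofReal_one]

lemma shift_single (v x : Fin n → ZMod 2) :
    shiftM n v *ᵥ Pi.single x 1 = Pi.single (x + v) (1 : ℂ) := by
  rw [mulVec_single_col]
  funext p
  rw [Pi.single_apply]
  simp [shiftM]

theorem final (n : ℕ) (y z : Fin n → ZMod 2) (b : ZMod 2) :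
    (exp ((-Complex.I * ((Real.pi / 2 : ℝ) : ℂ)) • ipHam n)) *ᵥ
        (Pi.single ((0 : Fin (n + 1)), (y, z, b)) 1) =
      (-Complex.I) ^ n •
        (Pi.single ((Fin.last n), (y, z, b + ∑ s : Fin n, y s * z s)) 1 :
          (Fin (n + 1)) × ((Fin n → ZMod 2) × (Fin n → ZMod 2) × ZMod 2) → ℂ) := by
  set c : ℂ := -Complex.I * ((Real.pi / 2 : ℝ) : ℂ) with hc
  have key2 : (c • ipHam n) * Pmat n y z b = Pmat n y z b * (c • clockG n) := by
    rw [Matrix.smul_mul, keyEq, Matrix.mul_smul]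
  have hexp := exp_mul_intertwine _ _ _ key2
  calc (exp (c • ipHam n)) *ᵥ (Pi.single ((0 : Fin (n + 1)), (y, z, b)) 1)
      = (exp (c • ipHam n)) *ᵥ (Pmat n y z b *ᵥ Pi.single 0 1) := by
        rw [mulVec_single_col (Pmat n y z b) 0, Pcol0]
    _ = (exp (c • ipHam n) * Pmat n y z b) *ᵥ Pi.single 0 1 := by
        rw [← Matrix.mulVec_mulVec]
    _ = (Pmat n y z b * exp (c • clockG n)) *ᵥ Pi.single 0 1 := by rw [hexp]
    _ = Pmat n y z b *ᵥ (exp (c • clockG n) *ᵥ Pi.single 0 1) := by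
        rw [Matrix.mulVec_mulVec]
    _ = Pmat n y z b *ᵥ (((-Complex.I) ^ n • shiftM n 1) *ᵥ Pi.single 0 1) := by
        rw [hc, exp_clockG]
    _ = (-Complex.I) ^ n • (Pmat n y z b *ᵥ (shiftM n 1 *ᵥ Pi.single 0 1)) := by
        rw [Matrix.smul_mulVec, Matrix.mulVec_smul]
    _ = (-Complex.I) ^ n • (Pmat n y z b *ᵥ Pi.single 1 1) := by
        rw [shift_single, zero_add]
    _ = (-Complex.I) ^ n •
        (Pi.single ((Fin.last n), (y, z, b + ∑ s : Fin n, y s * z s)) 1 :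
          (Fin (n + 1)) × ((Fin n → ZMod 2) × (Fin n → ZMod 2) × ZMod 2) → ℂ) := by
        rw [mulVec_single_col, Pcol1]

end IpAux

/-- The dynamics of the inner-product clock Hamiltonian at time `π/2` maps
`e₀ ⊗ |y⟩ ⊗ |z⟩ ⊗ |b⟩` to `(−i)^n · e_n ⊗ |y⟩ ⊗ |z⟩ ⊗ |b ⊕ (⊕_s y_s ∧ z_s)⟩`. -/
theorem ipHam_evolution (n : ℕ) (hn : 1 ≤ n) :
    ∀ (y z : Fin n → ZMod 2) (b : ZMod 2),
      (NormedSpace.exp ((-Complex.I * ((Real.pi / 2 : ℝ) : ℂ)) • ipHam n)) *ᵥ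
          (Pi.single ((0 : Fin (n + 1)), (y, z, b)) 1) =
        (-Complex.I) ^ n •
          (Pi.single ((Fin.last n), (y, z, b + ∑ s : Fin n, y s * z s)) 1 :
            (Fin (n + 1)) × ((Fin n → ZMod 2) × (Fin n → ZMod 2) × ZMod 2) → ℂ) := by
  intro y z b
  exact IpAux.final n y z b
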